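/- Under Assumptions 1 and 2, with GTT stepsize 0 < γ < 2/L, ρ := max{|1−γm|, |1−γL|}, σ := 1 + h·(C₀C₁/m² + C₂/m), and Γ := (h²/2)·(C₀²C₁/m³ + 2C₀C₂/m² + C₃/m), the full prediction-correction iteration of GTT satisfies the one-step recursion ‖x_{k+1} − x*(t_{k+1})‖ ≤ ρ^τ·σ·‖x_k − x*(t_k)‖ + ρ^τ·Γ for every k ≥ 0. -/

import Mathlib

noncomputable section

/-- The setting of a time-varying, smooth, strongly convex optimization problem
`min_{x ∈ ℝⁿ} f(x;t)`, bundling the objective `f`, its derivatives, the Hessian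
inverse, the optimal trajectory `x*(t)`, and Assumptions 1 and 2 of the paper. -/
structure TVOpt (n : ℕ) where
  /-- the objective `f(x;t)` -/
  f : EuclideanSpace ℝ (Fin n) → ℝ → ℝ
  /-- the gradient `∇ₓ f(x;t)` -/
  grad : EuclideanSpace ℝ (Fin n) → ℝ → EuclideanSpace ℝ (Fin n)
  /-- the Hessian `∇ₓₓ f(x;t)` -/
  hess : EuclideanSpace ℝ (Fin n) → ℝ →
    EuclideanSpace ℝ (Fin n) →L[ℝ] EuclideanSpace ℝ (Fin n)
  /-- the Hessian inverse `[∇ₓₓ f(x;t)]⁻¹` -/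
  hessInv : EuclideanSpace ℝ (Fin n) → ℝ →
    EuclideanSpace ℝ (Fin n) →L[ℝ] EuclideanSpace ℝ (Fin n)
  /-- the mixed partial derivative `∇_{tx} f(x;t)` -/
  dtgrad : EuclideanSpace ℝ (Fin n) → ℝ → EuclideanSpace ℝ (Fin n)
  /-- the third derivative tensor `∇ₓₓₓ f(x;t)` -/
  d3 : EuclideanSpace ℝ (Fin n) → ℝ →
    EuclideanSpace ℝ (Fin n) →L[ℝ] EuclideanSpace ℝ (Fin n) →L[ℝ] EuclideanSpace ℝ (Fin n)
  /-- the time derivative of the Hessian `∇_{xtx} f(x;t)` -/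
  dthess : EuclideanSpace ℝ (Fin n) → ℝ →
    EuclideanSpace ℝ (Fin n) →L[ℝ] EuclideanSpace ℝ (Fin n)
  /-- the second time derivative of the gradient `∇_{ttx} f(x;t)` -/
  dttgrad : EuclideanSpace ℝ (Fin n) → ℝ → EuclideanSpace ℝ (Fin n)
  /-- the optimal trajectory `x*(t)` -/
  xstar : ℝ → EuclideanSpace ℝ (Fin n)
  /-- strong convexity constant -/
  m : ℝ
  /-- Hessian norm bound (gradient Lipschitz constant) -/
  L : ℝ
  C0 : ℝ
  C1 : ℝ
  C2 : ℝ
  C3 : ℝ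
  m_pos : 0 < m
  grad_spec : ∀ (x : EuclideanSpace ℝ (Fin n)) (t : ℝ), HasGradientAt (fun y => f y t) (grad x t) x
  hess_spec : ∀ (x : EuclideanSpace ℝ (Fin n)) (t : ℝ), HasFDerivAt (fun y => grad y t) (hess x t) x
  dtgrad_spec : ∀ (x : EuclideanSpace ℝ (Fin n)) (t : ℝ), HasDerivAt (fun s => grad x s) (dtgrad x t) t
  d3_spec : ∀ (x : EuclideanSpace ℝ (Fin n)) (t : ℝ), HasFDerivAt (fun y => hess y t) (d3 x t) x
  dthess_spec : ∀ (x : EuclideanSpace ℝ (Fin n)) (t : ℝ), HasDerivAt (fun s => hess x s) (dthess x t) t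
  dttgrad_spec : ∀ (x : EuclideanSpace ℝ (Fin n)) (t : ℝ), HasDerivAt (fun s => dtgrad x s) (dttgrad x t) t
  /-- Assumption 1: `∇ₓₓ f(x;t) ⪰ m·I` uniformly in `x` and `t`. -/
  strong_convex : ∀ (x : EuclideanSpace ℝ (Fin n)) (t : ℝ) (v : EuclideanSpace ℝ (Fin n)),
    m * ‖v‖ ^ 2 ≤ @inner ℝ _ _ v (hess x t v)
  hessInv_left : ∀ (x : EuclideanSpace ℝ (Fin n)) (t : ℝ), ContinuousLinearMap.comp (hessInv x t) (hess x t) =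
    ContinuousLinearMap.id ℝ (EuclideanSpace ℝ (Fin n))
  hessInv_right : ∀ (x : EuclideanSpace ℝ (Fin n)) (t : ℝ), ContinuousLinearMap.comp (hess x t) (hessInv x t) =
    ContinuousLinearMap.id ℝ (EuclideanSpace ℝ (Fin n))
  /-- Assumption 2: bounded derivatives, uniformly in `x` and `t`. -/
  hess_bound : ∀ (x : EuclideanSpace ℝ (Fin n)) (t : ℝ), ‖hess x t‖ ≤ L
  dtgrad_bound : ∀ (x : EuclideanSpace ℝ (Fin n)) (t : ℝ), ‖dtgrad x t‖ ≤ C0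
  d3_bound : ∀ (x : EuclideanSpace ℝ (Fin n)) (t : ℝ), ‖d3 x t‖ ≤ C1
  dthess_bound : ∀ (x : EuclideanSpace ℝ (Fin n)) (t : ℝ), ‖dthess x t‖ ≤ C2
  dttgrad_bound : ∀ (x : EuclideanSpace ℝ (Fin n)) (t : ℝ), ‖dttgrad x t‖ ≤ C3
  /-- `x*(t)` minimizes `f(·;t)` -/
  xstar_min : ∀ t : ℝ, IsMinOn (fun x => f x t) Set.univ (xstar t)
  /-- equivalently, `∇ₓ f(x*(t);t) = 0` -/
  xstar_grad : ∀ t : ℝ, grad (xstar t) t = 0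

open scoped RealInnerProductSpace

section Aux
open Set
variable {n : ℕ} (P : TVOpt n)
local notation "E" => EuclideanSpace ℝ (Fin n)

lemma TVOpt.C0_nonneg : 0 ≤ P.C0 := le_trans (norm_nonneg _) (P.dtgrad_bound 0 0)
lemma TVOpt.C1_nonneg : 0 ≤ P.C1 := le_trans (norm_nonneg (P.d3 0 0)) (P.d3_bound 0 0)
lemma TVOpt.C2_nonneg : 0 ≤ P.C2 := le_trans (norm_nonneg _) (P.dthess_bound 0 0)
lemma TVOpt.C3_nonneg : 0 ≤ P.C3 := le_trans (norm_nonneg _) (P.dttgrad_bound 0 0)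
lemma TVOpt.L_nonneg : 0 ≤ P.L := le_trans (norm_nonneg _) (P.hess_bound 0 0)

lemma TVOpt.hess_symm (x : E) (t : ℝ) (u w : E) :
    ⟪P.hess x t u, w⟫ = ⟪u, P.hess x t w⟫ := by
  have hf : ∀ y : E, HasFDerivAt (fun z => P.f z t)
      ((innerSL ℝ : E →L[ℝ] E →L[ℝ] ℝ) (P.grad y t)) y := by
    intro y
    have h1 := (P.grad_spec y t).hasFDerivAt
    have he : (innerSL ℝ : E →L[ℝ] E →L[ℝ] ℝ) (P.grad y t)
        = InnerProductSpace.toDual ℝ _ (P.grad y t) :=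
      ContinuousLinearMap.ext fun w => by
        simp [InnerProductSpace.toDual_apply_apply]
    rw [he]; exact h1
  have hx : HasFDerivAt (fun y : E => (innerSL ℝ : E →L[ℝ] E →L[ℝ] ℝ) (P.grad y t))
      ((innerSL ℝ : E →L[ℝ] E →L[ℝ] ℝ).comp (P.hess x t)) x :=
    ((innerSL ℝ : E →L[ℝ] E →L[ℝ] ℝ).hasFDerivAt).comp x (P.hess_spec x t)
  have h := second_derivative_symmetric hf hx u w
  simp only [ContinuousLinearMap.comp_apply, innerSL_apply_apply] at h
  rw [h, real_inner_comm]
end Aux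

section SymOp
variable {n : ℕ}
local notation "E" => EuclideanSpace ℝ (Fin n)
-- polarization-type norm bound for symmetric operators
theorem sym_op_norm_bound (T : E →L[ℝ] E) (ρ : ℝ) (hρ : 0 ≤ ρ)
    (hsym : ∀ u w : E, ⟪T u, w⟫ = ⟪u, T w⟫)
    (hray : ∀ v : E, |⟪v, T v⟫| ≤ ρ * ‖v‖ ^ 2) (v : E) : ‖T v‖ ≤ ρ * ‖v‖ := by
  rcases eq_or_ne (T v) 0 with h0 | h0
  · simpa [h0] using mul_nonneg hρ (norm_nonneg v)
  have hpol : ∀ u w : E, 4 * ⟪T u, w⟫ = ⟪u + w, T (u + w)⟫ - ⟪u - w, T (u - w)⟫ := by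
    intro u w
    have h1 := hsym u w
    have h2 := real_inner_comm (T u) w
    have h3 := real_inner_comm (T w) u
    simp only [map_add, map_sub, inner_add_left, inner_add_right, inner_sub_left,
      inner_sub_right]
    have h4 := hsym w u
    nlinarith [real_inner_comm u (T w), real_inner_comm w (T u), real_inner_comm u (T u),
      real_inner_comm w (T w)]
  set w : E := (‖v‖ / ‖T v‖) • T v with hw
  have hTvpos : 0 < ‖T v‖ := norm_pos_iff.mpr h0
  have key : 4 * ⟪T v, w⟫ ≤ ρ * (‖v + w‖ ^ 2 + ‖v - w‖ ^ 2) := by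
    rw [hpol v w]
    have a1 := (abs_le.mp (hray (v + w))).2
    have a2 := (abs_le.mp (hray (v - w))).1
    nlinarith
  have hpar : ‖v + w‖ ^ 2 + ‖v - w‖ ^ 2 = 2 * (‖v‖ ^ 2 + ‖w‖ ^ 2) := by
    have := parallelogram_law_with_norm ℝ v w
    nlinarith
  have hwnorm : ‖w‖ = ‖v‖ := by
    rw [hw, norm_smul, Real.norm_eq_abs, abs_div, abs_of_nonneg (norm_nonneg v),
      abs_of_nonneg (norm_nonneg (T v))]
    field_simp
  have hinner : ⟪T v, w⟫ = (‖v‖ / ‖T v‖) * ‖T v‖ ^ 2 := by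
    rw [hw, real_inner_smul_right, real_inner_self_eq_norm_sq]
  have hval : ⟪T v, w⟫ = ‖v‖ * ‖T v‖ := by
    rw [hinner]; field_simp
  rw [hval, hpar, hwnorm] at key
  rcases eq_or_lt_of_le (norm_nonneg v) with hv0 | hv0
  · exfalso
    have : v = 0 := by simpa using hv0.symm
    simp [this] at h0
  nlinarith
end SymOp

section Aux2
open Set
variable {n : ℕ} (P : TVOpt n)
local notation "E" => EuclideanSpace ℝ (Fin n)

lemma TVOpt.strong_mono (t : ℝ) (x y : E) :
    P.m * ‖x - y‖ ^ 2 ≤ ⟪P.grad x t - P.grad y t, x - y⟫ := by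
  set d := x - y with hd
  have hline : ∀ s : ℝ, HasDerivAt (fun s : ℝ => y + s • d) d s := by
    intro s
    simpa using ((hasDerivAt_id s).smul_const d).const_add y
  set ψ : ℝ → ℝ := fun s => ⟪P.grad (y + s • d) t, d⟫ - s * (P.m * ‖d‖ ^ 2) with hψdef
  have hψ : ∀ s : ℝ, HasDerivAt ψ (⟪P.hess (y + s • d) t d, d⟫ - P.m * ‖d‖ ^ 2) s := by
    intro s
    have hg : HasDerivAt (fun s : ℝ => P.grad (y + s • d) t) (P.hess (y + s • d) t d) s :=
      (P.hess_spec _ t).comp_hasDerivAt s (hline s)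
    have hi : HasDerivAt (fun s : ℝ => ⟪P.grad (y + s • d) t, d⟫)
        (⟪P.hess (y + s • d) t d, d⟫) s := by
      simpa using HasDerivAt.inner ℝ hg (hasDerivAt_const s d)
    have := hi.sub ((hasDerivAt_id s).mul_const (P.m * ‖d‖ ^ 2))
    rw [one_mul] at this
    exact this
  have hmono : Monotone ψ := by
    apply monotone_of_deriv_nonneg (fun s => (hψ s).differentiableAt)
    intro s
    rw [(hψ s).deriv]
    have h1 := P.strong_convex (y + s • d) t d
    have h2 := real_inner_comm d (P.hess (y + s • d) t d)
    linarith
  have h01 := hmono (by norm_num : (0 : ℝ) ≤ 1)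
  have e0 : ψ 0 = ⟪P.grad y t, d⟫ := by simp [hψdef]
  have e1 : ψ 1 = ⟪P.grad x t, d⟫ - P.m * ‖d‖ ^ 2 := by
    simp [hψdef, hd]
  rw [e0, e1] at h01
  rw [inner_sub_left]
  linarith

lemma TVOpt.dist_le_grad (t : ℝ) (x : E) :
    P.m * ‖x - P.xstar t‖ ≤ ‖P.grad x t‖ := by
  have h := P.strong_mono t x (P.xstar t)
  rw [P.xstar_grad t, sub_zero] at h
  have h2 : ⟪P.grad x t, x - P.xstar t⟫ ≤ ‖P.grad x t‖ * ‖x - P.xstar t‖ :=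
    real_inner_le_norm _ _
  rcases eq_or_lt_of_le (norm_nonneg (x - P.xstar t)) with h0 | h0
  · rw [← h0]
    simpa using norm_nonneg (P.grad x t)
  · nlinarith

lemma TVOpt.hessInv_bound (x : E) (t : ℝ) (u : E) :
    P.m * ‖P.hessInv x t u‖ ≤ ‖u‖ := by
  set v := P.hessInv x t u with hv
  have happ : P.hess x t v = u := by
    have := DFunLike.congr_fun (P.hessInv_right x t) u
    simpa [ContinuousLinearMap.comp_apply] using this
  have h1 := P.strong_convex x t v
  rw [happ] at h1
  have h2 : ⟪v, u⟫ ≤ ‖v‖ * ‖u‖ := real_inner_le_norm _ _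
  rcases eq_or_lt_of_le (norm_nonneg v) with h0 | h0
  · rw [← h0]
    simpa using norm_nonneg u
  · nlinarith

lemma TVOpt.hess_lip_x (t : ℝ) (x y : E) :
    ‖P.hess x t - P.hess y t‖ ≤ P.C1 * ‖x - y‖ :=
  convex_univ.norm_image_sub_le_of_norm_hasFDerivWithin_le (𝕜 := ℝ)
    (f := fun z => P.hess z t) (f' := fun z => P.d3 z t)
    (fun z _ => (P.d3_spec z t).hasFDerivWithinAt)
    (fun z _ => P.d3_bound z t) (mem_univ y) (mem_univ x)

lemma TVOpt.hess_lip_t (x : E) (s t : ℝ) :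
    ‖P.hess x t - P.hess x s‖ ≤ P.C2 * |t - s| := by
  have := convex_univ.norm_image_sub_le_of_norm_hasDerivWithin_le (𝕜 := ℝ)
    (f := fun r => P.hess x r) (f' := fun r => P.dthess x r)
    (fun r _ => (P.dthess_spec x r).hasDerivWithinAt)
    (fun r _ => P.dthess_bound x r) (mem_univ s) (mem_univ t)
  simpa only [Real.norm_eq_abs] using this

lemma TVOpt.dtgrad_lip_t (x : E) (s t : ℝ) :
    ‖P.dtgrad x t - P.dtgrad x s‖ ≤ P.C3 * |t - s| := by
  have := convex_univ.norm_image_sub_le_of_norm_hasDerivWithin_le (𝕜 := ℝ)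
    (f := fun r => P.dtgrad x r) (f' := fun r => P.dttgrad x r)
    (fun r _ => (P.dttgrad_spec x r).hasDerivWithinAt)
    (fun r _ => P.dttgrad_bound x r) (mem_univ s) (mem_univ t)
  simpa only [Real.norm_eq_abs] using this

lemma TVOpt.grad_double_diff (t t' : ℝ) (x y : E) :
    ‖(P.grad x t' - P.grad x t) - (P.grad y t' - P.grad y t)‖
      ≤ P.C2 * |t' - t| * ‖x - y‖ :=
  convex_univ.norm_image_sub_le_of_norm_hasFDerivWithin_le
    (f := fun z => P.grad z t' - P.grad z t)
    (f' := fun z => P.hess z t' - P.hess z t)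
    (𝕜 := ℝ)
    (fun z _ => ((P.hess_spec z t').sub (P.hess_spec z t)).hasFDerivWithinAt)
    (fun z _ => P.hess_lip_t z t t') (mem_univ y) (mem_univ x)

lemma TVOpt.dtgrad_lip_x (t : ℝ) (x y : E) :
    ‖P.dtgrad x t - P.dtgrad y t‖ ≤ P.C2 * ‖x - y‖ := by
  have hu : ∀ s : ℝ, HasDerivAt (fun r => P.grad x r - P.grad y r)
      (P.dtgrad x s - P.dtgrad y s) s :=
    fun s => (P.dtgrad_spec x s).sub (P.dtgrad_spec y s)
  have ht := hasDerivAt_iff_tendsto_slope.mp (hu t)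
  refine le_of_tendsto ht.norm ?_
  filter_upwards [self_mem_nhdsWithin] with s hs
  have hs' : s ≠ t := hs
  have hub : ‖(P.grad x s - P.grad y s) - (P.grad x t - P.grad y t)‖
      ≤ P.C2 * |s - t| * ‖x - y‖ := by
    have := P.grad_double_diff t s x y
    convert this using 2
    abel
  rw [slope_def_module]
  rw [norm_smul, Real.norm_eq_abs, abs_inv]
  have habs : 0 < |s - t| := abs_pos.mpr (sub_ne_zero.mpr hs')
  rw [inv_mul_le_iff₀ habs]
  calc ‖(P.grad x s - P.grad y s) - (P.grad x t - P.grad y t)‖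
      ≤ P.C2 * |s - t| * ‖x - y‖ := hub
    _ = |s - t| * (P.C2 * ‖x - y‖) := by ring

end Aux2

section Aux3
open Set
variable {n : ℕ} (P : TVOpt n)
local notation "E" => EuclideanSpace ℝ (Fin n)

lemma taylor_aux {g g' : ℝ → E} {K a b : ℝ} (hb : 0 ≤ b)
    (hg : ∀ s, HasDerivAt g (g' s) s)
    (hK : ∀ s ∈ Icc a (a + b), ‖g' s - g' a‖ ≤ K * (s - a)) :
    ‖g (a + b) - g a - b • g' a‖ ≤ K * b ^ 2 / 2 := by
  set f : ℝ → E := fun s => g s - g a - (s - a) • g' a with hfdef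
  have hf : ∀ s, HasDerivAt f (g' s - g' a) s := by
    intro s
    have h1 : HasDerivAt (fun s : ℝ => (s - a) • g' a) (g' a) s := by
      simpa using ((hasDerivAt_id s).sub_const a).smul_const (g' a)
    exact ((hg s).sub_const (g a)).sub h1
  have hB : ∀ s : ℝ, HasDerivAt (fun s => K * (s - a) ^ 2 / 2) (K * (s - a)) s := by
    intro s
    have h2 := ((((hasDerivAt_id s).sub_const a).pow 2).const_mul K).div_const 2
    exact h2.congr_deriv (by simp only [id, Nat.cast_ofNat, mul_one]; norm_num; ring)
  have key := image_norm_le_of_norm_deriv_right_le_deriv_boundary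
    (f := f) (f' := fun s => g' s - g' a) (a := a) (b := a + b)
    (B := fun s => K * (s - a) ^ 2 / 2) (B' := fun s => K * (s - a))
    (fun s _ => (hf s).continuousAt.continuousWithinAt)
    (fun s _ => (hf s).hasDerivWithinAt)
    (by simp [hfdef])
    hB
    (fun s hs => hK s (Ico_subset_Icc_self hs))
    (right_mem_Icc.mpr (by linarith))
  simpa [hfdef, add_sub_cancel_left] using key

lemma TVOpt.corr_lipschitz {γ ρ : ℝ} (hγ : 0 < γ)
    (hρ : ρ = max |1 - γ * P.m| |1 - γ * P.L|) (t : ℝ) (a b : E) :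
    ‖(a - γ • P.grad a t) - (b - γ • P.grad b t)‖ ≤ ρ * ‖a - b‖ := by
  have hρ0 : 0 ≤ ρ := hρ ▸ le_trans (abs_nonneg _) (le_max_left _ _)
  have hρm : |1 - γ * P.m| ≤ ρ := hρ ▸ le_max_left _ _
  have hρL : |1 - γ * P.L| ≤ ρ := hρ ▸ le_max_right _ _
  have hop : ∀ z v : E, ‖v - γ • P.hess z t v‖ ≤ ρ * ‖v‖ := by
    intro z
    set T : E →L[ℝ] E := ContinuousLinearMap.id ℝ _ - γ • P.hess z t with hT
    have hsym : ∀ u w : E, ⟪T u, w⟫ = ⟪u, T w⟫ := by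
      intro u w
      simp only [hT, ContinuousLinearMap.sub_apply, ContinuousLinearMap.smul_apply,
        ContinuousLinearMap.id_apply, inner_sub_left, inner_sub_right,
        real_inner_smul_left, real_inner_smul_right]
      rw [P.hess_symm z t u w]
    have hray : ∀ v : E, |⟪v, T v⟫| ≤ ρ * ‖v‖ ^ 2 := by
      intro v
      have hself : ⟪v, v⟫ = ‖v‖ ^ 2 := real_inner_self_eq_norm_sq v
      have h2 : P.m * ‖v‖ ^ 2 ≤ ⟪v, P.hess z t v⟫ := P.strong_convex z t v
      have h3 : ⟪v, P.hess z t v⟫ ≤ P.L * ‖v‖ ^ 2 := by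
        calc ⟪v, P.hess z t v⟫ ≤ ‖v‖ * ‖P.hess z t v‖ := real_inner_le_norm _ _
          _ ≤ ‖v‖ * (‖P.hess z t‖ * ‖v‖) := by
              gcongr
              exact ContinuousLinearMap.le_opNorm _ _
          _ ≤ P.L * ‖v‖ ^ 2 := by
              have := P.hess_bound z t
              nlinarith [norm_nonneg v, sq_nonneg ‖v‖, mul_nonneg (norm_nonneg v) (norm_nonneg v)]
      have hTv : ⟪v, T v⟫ = ‖v‖ ^ 2 - γ * ⟪v, P.hess z t v⟫ := by
        simp only [hT, ContinuousLinearMap.sub_apply, ContinuousLinearMap.smul_apply,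
          ContinuousLinearMap.id_apply, inner_sub_right, real_inner_smul_right]
        rw [hself]
      rw [hTv, abs_le]
      have hm := abs_le.mp hρm
      have hL := abs_le.mp hρL
      constructor
      · nlinarith [sq_nonneg ‖v‖]
      · nlinarith [sq_nonneg ‖v‖]
    have := sym_op_norm_bound T ρ hρ0 hsym hray
    intro v
    have hv := this v
    simpa [hT, ContinuousLinearMap.sub_apply] using hv
  have hbound : ∀ y : E, ‖(ContinuousLinearMap.id ℝ _ - γ • P.hess y t : E →L[ℝ] E)‖ ≤ ρ :=
    fun y => ContinuousLinearMap.opNorm_le_bound _ hρ0 (fun v => by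
      simpa [ContinuousLinearMap.sub_apply] using hop y v)
  exact convex_univ.norm_image_sub_le_of_norm_hasFDerivWithin_le (𝕜 := ℝ)
    (f := fun y : E => y - γ • P.grad y t)
    (f' := fun y => ContinuousLinearMap.id ℝ _ - γ • P.hess y t)
    (fun y _ => ((hasFDerivAt_id y).sub ((P.hess_spec y t).const_smul γ)).hasFDerivWithinAt)
    (fun y _ => hbound y) (mem_univ b) (mem_univ a)
end Aux3

section Aux4
open Set
variable {n : ℕ} (P : TVOpt n)
local notation "E" => EuclideanSpace ℝ (Fin n)

lemma TVOpt.corr_iter {γ ρ : ℝ} (hγ : 0 < γ)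
    (hρ : ρ = max |1 - γ * P.m| |1 - γ * P.L|) (t : ℝ) (τ : ℕ) (a : E) :
    ‖(fun y => y - γ • P.grad y t)^[τ] a - P.xstar t‖ ≤ ρ ^ τ * ‖a - P.xstar t‖ := by
  have hρ0 : 0 ≤ ρ := hρ ▸ le_trans (abs_nonneg _) (le_max_left _ _)
  induction τ with
  | zero => simp
  | succ k ih =>
    rw [Function.iterate_succ_apply']
    have hfix : P.xstar t - γ • P.grad (P.xstar t) t = P.xstar t := by
      rw [P.xstar_grad t]; simp
    calc ‖((fun y => y - γ • P.grad y t)^[k] a - γ • P.grad ((fun y => y - γ • P.grad y t)^[k] a) t) - P.xstar t‖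
        = ‖((fun y => y - γ • P.grad y t)^[k] a - γ • P.grad ((fun y => y - γ • P.grad y t)^[k] a) t)
            - (P.xstar t - γ • P.grad (P.xstar t) t)‖ := by rw [hfix]
      _ ≤ ρ * ‖(fun y => y - γ • P.grad y t)^[k] a - P.xstar t‖ :=
          P.corr_lipschitz hγ hρ t _ _
      _ ≤ ρ * (ρ ^ k * ‖a - P.xstar t‖) := by
          exact mul_le_mul_of_nonneg_left ih hρ0
      _ = ρ ^ (k + 1) * ‖a - P.xstar t‖ := by ring

lemma TVOpt.pred_lip {h : ℝ} (hh : 0 ≤ h) (t : ℝ) (a b : E) :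
    ‖(a - h • P.hessInv a t (P.dtgrad a t)) - (b - h • P.hessInv b t (P.dtgrad b t))‖
      ≤ (1 + h * (P.C0 * P.C1 / P.m ^ 2 + P.C2 / P.m)) * ‖a - b‖ := by
  have hm := P.m_pos
  set d := ‖a - b‖ with hd
  have hd0 : 0 ≤ d := norm_nonneg _
  set u : E := P.hessInv b t (P.dtgrad b t) with hu
  -- key identity
  have hid : P.hessInv a t (P.dtgrad a t) - P.hessInv b t (P.dtgrad b t)
      = P.hessInv a t (P.dtgrad a t - P.dtgrad b t)
        + P.hessInv a t ((P.hess b t - P.hess a t) u) := by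
    have h1 : P.hess b t u = P.dtgrad b t := by
      have := DFunLike.congr_fun (P.hessInv_right b t) (P.dtgrad b t)
      simpa [ContinuousLinearMap.comp_apply] using this
    have h2 : P.hessInv a t (P.hess a t u) = u := by
      have := DFunLike.congr_fun (P.hessInv_left a t) u
      simpa [ContinuousLinearMap.comp_apply] using this
    rw [map_sub, ContinuousLinearMap.sub_apply, map_sub, h1, h2]
    abel
  set X1 := ‖P.hessInv a t (P.dtgrad a t - P.dtgrad b t)‖ with hX1
  set X2 := ‖P.hessInv a t ((P.hess b t - P.hess a t) u)‖ with hX2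
  have hX10 : 0 ≤ X1 := norm_nonneg _
  have hX20 : 0 ≤ X2 := norm_nonneg _
  have n1 : P.m * X1 ≤ P.C2 * d := by
    calc P.m * X1 ≤ ‖P.dtgrad a t - P.dtgrad b t‖ := P.hessInv_bound a t _
      _ ≤ P.C2 * d := P.dtgrad_lip_x t a b
  have n2 : P.m * ‖u‖ ≤ P.C0 := by
    calc P.m * ‖u‖ ≤ ‖P.dtgrad b t‖ := P.hessInv_bound b t _
      _ ≤ P.C0 := P.dtgrad_bound b t
  have n3 : P.m * X2 ≤ P.C1 * d * ‖u‖ := by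
    calc P.m * X2 ≤ ‖(P.hess b t - P.hess a t) u‖ := P.hessInv_bound a t _
      _ ≤ ‖P.hess b t - P.hess a t‖ * ‖u‖ := ContinuousLinearMap.le_opNorm _ _
      _ ≤ (P.C1 * ‖b - a‖) * ‖u‖ := by
          exact mul_le_mul_of_nonneg_right (P.hess_lip_x t b a) (norm_nonneg u)
      _ = P.C1 * d * ‖u‖ := by rw [norm_sub_rev, ← hd]
  have hC1 := P.C1_nonneg
  have hC2 := P.C2_nonneg
  have hC0 := P.C0_nonneg
  have hun : 0 ≤ ‖u‖ := norm_nonneg u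
  have f1 : P.m ^ 2 * X1 ≤ P.C2 * d * P.m := by nlinarith
  have f2 : P.m ^ 2 * X2 ≤ P.C0 * P.C1 * d := by
    nlinarith [mul_le_mul_of_nonneg_left n3 hm.le,
      mul_le_mul_of_nonneg_left n2 (mul_nonneg hC1 hd0)]
  have key : X1 + X2 ≤ (P.C0 * P.C1 / P.m ^ 2 + P.C2 / P.m) * d := by
    have e : (P.C0 * P.C1 / P.m ^ 2 + P.C2 / P.m) * d
        = ((P.C0 * P.C1 + P.C2 * P.m) * d) / P.m ^ 2 := by
      field_simp
    rw [e, le_div_iff₀ (by positivity)]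
    nlinarith
  calc ‖(a - h • P.hessInv a t (P.dtgrad a t)) - (b - h • P.hessInv b t (P.dtgrad b t))‖
      = ‖(a - b) - h • (P.hessInv a t (P.dtgrad a t) - P.hessInv b t (P.dtgrad b t))‖ := by
        rw [smul_sub]; congr 1; abel
    _ ≤ ‖a - b‖ + ‖h • (P.hessInv a t (P.dtgrad a t) - P.hessInv b t (P.dtgrad b t))‖ :=
        norm_sub_le _ _
    _ = d + h * ‖P.hessInv a t (P.dtgrad a t) - P.hessInv b t (P.dtgrad b t)‖ := by
        rw [norm_smul, Real.norm_eq_abs, abs_of_nonneg hh, hd]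
    _ ≤ d + h * (X1 + X2) := by
        have := norm_add_le (P.hessInv a t (P.dtgrad a t - P.dtgrad b t))
          (P.hessInv a t ((P.hess b t - P.hess a t) u))
        rw [hid]
        have h2 : ‖P.hessInv a t (P.dtgrad a t - P.dtgrad b t)
            + P.hessInv a t ((P.hess b t - P.hess a t) u)‖ ≤ X1 + X2 := this
        nlinarith
    _ ≤ d + h * ((P.C0 * P.C1 / P.m ^ 2 + P.C2 / P.m) * d) := by
        have := mul_le_mul_of_nonneg_left key hh
        linarith
    _ = (1 + h * (P.C0 * P.C1 / P.m ^ 2 + P.C2 / P.m)) * d := by ring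
end Aux4

section Aux5
open Set
variable {n : ℕ} (P : TVOpt n)
local notation "E" => EuclideanSpace ℝ (Fin n)

set_option maxHeartbeats 1000000 in
lemma TVOpt.pred_err {h : ℝ} (hh : 0 ≤ h) (t : ℝ) :
    ‖(P.xstar t - h • P.hessInv (P.xstar t) t (P.dtgrad (P.xstar t) t)) - P.xstar (t + h)‖
      ≤ h ^ 2 / 2 * (P.C0 ^ 2 * P.C1 / P.m ^ 3 + 2 * P.C0 * P.C2 / P.m ^ 2 + P.C3 / P.m) := by
  have hm := P.m_pos
  have hC0 := P.C0_nonneg; have hC1 := P.C1_nonneg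
  have hC2 := P.C2_nonneg; have hC3 := P.C3_nonneg
  set z : E := P.xstar t with hz
  set w : E := -(h • P.hessInv z t (P.dtgrad z t)) with hw
  have hpred : z - h • P.hessInv z t (P.dtgrad z t) = z + w := by
    rw [hw, sub_eq_add_neg]
  set W := ‖w‖ with hW
  have hW0 : 0 ≤ W := norm_nonneg _
  have hwb : P.m * W ≤ h * P.C0 := by
    have h1 := P.hessInv_bound z t (P.dtgrad z t)
    have h2 := P.dtgrad_bound z t
    have h3 : W = h * ‖P.hessInv z t (P.dtgrad z t)‖ := by
      rw [hW, hw, norm_neg, norm_smul, Real.norm_eq_abs, abs_of_nonneg hh]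
    nlinarith
  -- Taylor in x at time t + h
  have hlinder : ∀ s : ℝ, HasDerivAt (fun s : ℝ => z + s • w) w s := by
    intro s
    simpa using ((hasDerivAt_id s).smul_const w).const_add z
  have hgder : ∀ s : ℝ, HasDerivAt (fun s : ℝ => P.grad (z + s • w) (t + h))
      (P.hess (z + s • w) (t + h) w) s :=
    fun s => (P.hess_spec _ (t + h)).comp_hasDerivAt s (hlinder s)
  have hA : ‖P.grad (z + w) (t + h) - P.grad z (t + h) - P.hess z (t + h) w‖
      ≤ P.C1 * W ^ 2 / 2 := by
    have hK : ∀ s ∈ Icc (0 : ℝ) (0 + 1),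
        ‖P.hess (z + s • w) (t + h) w - P.hess (z + (0 : ℝ) • w) (t + h) w‖
          ≤ (P.C1 * W ^ 2) * (s - 0) := by
      intro s hs
      have hs0 : 0 ≤ s := hs.1
      calc ‖P.hess (z + s • w) (t + h) w - P.hess (z + (0 : ℝ) • w) (t + h) w‖
          = ‖(P.hess (z + s • w) (t + h) - P.hess (z + (0 : ℝ) • w) (t + h)) w‖ := by
            rw [ContinuousLinearMap.sub_apply]
        _ ≤ ‖P.hess (z + s • w) (t + h) - P.hess (z + (0 : ℝ) • w) (t + h)‖ * W :=
            ContinuousLinearMap.le_opNorm _ _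
        _ ≤ (P.C1 * ‖(z + s • w) - (z + (0 : ℝ) • w)‖) * W := by
            exact mul_le_mul_of_nonneg_right (P.hess_lip_x (t + h) _ _) hW0
        _ = (P.C1 * W ^ 2) * (s - 0) := by
            rw [show (z + s • w) - (z + (0 : ℝ) • w) = s • w by simp,
              norm_smul, Real.norm_eq_abs, abs_of_nonneg hs0]
            ring
    have := taylor_aux (by norm_num : (0:ℝ) ≤ 1) hgder hK
    simpa using this
  -- Taylor in t at point z
  have hB : ‖P.grad z (t + h) - P.grad z t - h • P.dtgrad z t‖ ≤ P.C3 * h ^ 2 / 2 := by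
    have hK : ∀ s ∈ Icc t (t + h), ‖P.dtgrad z s - P.dtgrad z t‖ ≤ P.C3 * (s - t) := by
      intro s hs
      have := P.dtgrad_lip_t z t s
      rwa [abs_of_nonneg (by linarith [hs.1])] at this
    exact taylor_aux hh (fun s => P.dtgrad_spec z s) hK
  -- time-Lipschitz of Hessian
  have hD : ‖P.hess z (t + h) - P.hess z t‖ ≤ P.C2 * h := by
    have := P.hess_lip_t z t (t + h)
    rwa [show t + h - t = h by ring, abs_of_nonneg hh] at this
  -- algebraic identity
  have hEz : P.hess z t w = -(h • P.dtgrad z t) := by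
    have happ : P.hess z t (P.hessInv z t (P.dtgrad z t)) = P.dtgrad z t := by
      have := DFunLike.congr_fun (P.hessInv_right z t) (P.dtgrad z t)
      simpa [ContinuousLinearMap.comp_apply] using this
    rw [hw, map_neg, map_smul, happ]
  have hgz : P.grad z t = 0 := P.xstar_grad t
  have hdecomp : P.grad (z + w) (t + h)
      = (P.grad (z + w) (t + h) - P.grad z (t + h) - P.hess z (t + h) w)
        + (P.grad z (t + h) - P.grad z t - h • P.dtgrad z t)
        + (P.hess z (t + h) - P.hess z t) w := by
    rw [ContinuousLinearMap.sub_apply, hEz, hgz]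
    abel
  have hgradbound : ‖P.grad (z + w) (t + h)‖
      ≤ P.C1 * W ^ 2 / 2 + P.C3 * h ^ 2 / 2 + P.C2 * h * W := by
    rw [hdecomp]
    have t1 := norm_add_le ((P.grad (z + w) (t + h) - P.grad z (t + h) - P.hess z (t + h) w)
        + (P.grad z (t + h) - P.grad z t - h • P.dtgrad z t)) ((P.hess z (t + h) - P.hess z t) w)
    have t2 := norm_add_le (P.grad (z + w) (t + h) - P.grad z (t + h) - P.hess z (t + h) w)
        (P.grad z (t + h) - P.grad z t - h • P.dtgrad z t)
    have t3 : ‖(P.hess z (t + h) - P.hess z t) w‖ ≤ P.C2 * h * W := by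
      calc ‖(P.hess z (t + h) - P.hess z t) w‖
          ≤ ‖P.hess z (t + h) - P.hess z t‖ * W := ContinuousLinearMap.le_opNorm _ _
        _ ≤ (P.C2 * h) * W := mul_le_mul_of_nonneg_right hD hW0
    linarith
  have hdist := P.dist_le_grad (t + h) (z + w)
  set dd := ‖(z + w) - P.xstar (t + h)‖ with hdd
  have hdd0 : 0 ≤ dd := norm_nonneg _
  have hkey : P.m * dd ≤ P.C1 * W ^ 2 / 2 + P.C3 * h ^ 2 / 2 + P.C2 * h * W :=
    le_trans hdist hgradbound
  rw [hpred]
  have e : h ^ 2 / 2 * (P.C0 ^ 2 * P.C1 / P.m ^ 3 + 2 * P.C0 * P.C2 / P.m ^ 2 + P.C3 / P.m)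
      = (h ^ 2 * (P.C0 ^ 2 * P.C1 + 2 * P.C0 * P.C2 * P.m + P.C3 * P.m ^ 2)) / (2 * P.m ^ 3) := by
    field_simp
  rw [← hdd, e, le_div_iff₀ (by positivity)]
  have g1 : P.m ^ 2 * W ^ 2 ≤ h ^ 2 * P.C0 ^ 2 := by
    have := mul_self_le_mul_self (by positivity : (0:ℝ) ≤ P.m * W) hwb
    nlinarith
  have g2 := mul_le_mul_of_nonneg_left hkey (by positivity : (0:ℝ) ≤ 2 * P.m ^ 2)
  have g3 := mul_le_mul_of_nonneg_left g1 hC1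
  have g4 := mul_le_mul_of_nonneg_left hwb (by positivity : (0:ℝ) ≤ 2 * P.C2 * h * P.m)
  nlinarith
end Aux5


/-- The full GTT prediction-correction iteration satisfies the
one-step recursion `‖x_(k+1) − x*(t_(k+1))‖ ≤ ρ^τ·σ·‖x_k − x*(t_k)‖ + ρ^τ·Γ`. -/
theorem gtt_one_step_recursion (n : ℕ) (P : TVOpt n) (h : ℝ) (hh : 0 < h)
    (γ : ℝ) (τ : ℕ) (hτ : 1 ≤ τ) (hγ0 : 0 < γ) (hγL : γ < 2 / P.L)
    (ρ : ℝ) (hρ : ρ = max |1 - γ * P.m| |1 - γ * P.L|)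
    (σ : ℝ) (hσ : σ = 1 + h * (P.C0 * P.C1 / P.m ^ 2 + P.C2 / P.m))
    (Γ : ℝ) (hΓ : Γ = h ^ 2 / 2 *
      (P.C0 ^ 2 * P.C1 / P.m ^ 3 + 2 * P.C0 * P.C2 / P.m ^ 2 + P.C3 / P.m))
    (x : ℕ → EuclideanSpace ℝ (Fin n))
    (hrec : ∀ k : ℕ, x (k + 1) =
      (fun y => y - γ • P.grad y (((k : ℝ) + 1) * h))^[τ]
        (x k - h • P.hessInv (x k) ((k : ℝ) * h) (P.dtgrad (x k) ((k : ℝ) * h)))) :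
    ∀ k : ℕ,
      ‖x (k + 1) - P.xstar (((k : ℝ) + 1) * h)‖ ≤
        ρ ^ τ * σ * ‖x k - P.xstar ((k : ℝ) * h)‖ + ρ ^ τ * Γ := by
  intro k
  have hρ0 : 0 ≤ ρ := hρ ▸ le_trans (abs_nonneg _) (le_max_left _ _)
  have hρτ : 0 ≤ ρ ^ τ := pow_nonneg hρ0 τ
  have ht' : ((k : ℝ) + 1) * h = (k : ℝ) * h + h := by ring
  have hrk := hrec k
  rw [ht'] at hrk ⊢
  have h1 : ‖x (k + 1) - P.xstar ((k : ℝ) * h + h)‖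
      ≤ ρ ^ τ * ‖(x k - h • P.hessInv (x k) ((k : ℝ) * h) (P.dtgrad (x k) ((k : ℝ) * h)))
          - P.xstar ((k : ℝ) * h + h)‖ := by
    rw [hrk]
    exact P.corr_iter hγ0 hρ ((k : ℝ) * h + h) τ _
  have h2 : ‖(x k - h • P.hessInv (x k) ((k : ℝ) * h) (P.dtgrad (x k) ((k : ℝ) * h)))
        - P.xstar ((k : ℝ) * h + h)‖
      ≤ σ * ‖x k - P.xstar ((k : ℝ) * h)‖ + Γ := by
    have hlip := P.pred_lip hh.le ((k : ℝ) * h) (x k) (P.xstar ((k : ℝ) * h))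
    have herr := P.pred_err hh.le ((k : ℝ) * h)
    calc ‖(x k - h • P.hessInv (x k) ((k : ℝ) * h) (P.dtgrad (x k) ((k : ℝ) * h)))
          - P.xstar ((k : ℝ) * h + h)‖
        ≤ ‖(x k - h • P.hessInv (x k) ((k : ℝ) * h) (P.dtgrad (x k) ((k : ℝ) * h)))
            - (P.xstar ((k : ℝ) * h) - h • P.hessInv (P.xstar ((k : ℝ) * h)) ((k : ℝ) * h)
                (P.dtgrad (P.xstar ((k : ℝ) * h)) ((k : ℝ) * h)))‖
          + ‖(P.xstar ((k : ℝ) * h) - h • P.hessInv (P.xstar ((k : ℝ) * h)) ((k : ℝ) * h)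
                (P.dtgrad (P.xstar ((k : ℝ) * h)) ((k : ℝ) * h)))
            - P.xstar ((k : ℝ) * h + h)‖ := norm_sub_le_norm_sub_add_norm_sub _ _ _
      _ ≤ σ * ‖x k - P.xstar ((k : ℝ) * h)‖ + Γ := by
          rw [hσ, hΓ]
          exact add_le_add hlip herr
  calc ‖x (k + 1) - P.xstar ((k : ℝ) * h + h)‖
      ≤ ρ ^ τ * ‖(x k - h • P.hessInv (x k) ((k : ℝ) * h) (P.dtgrad (x k) ((k : ℝ) * h)))
          - P.xstar ((k : ℝ) * h + h)‖ := h1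
    _ ≤ ρ ^ τ * (σ * ‖x k - P.xstar ((k : ℝ) * h)‖ + Γ) := mul_le_mul_of_nonneg_left h2 hρτ
    _ = ρ ^ τ * σ * ‖x k - P.xstar ((k : ℝ) * h)‖ + ρ ^ τ * Γ := by ring
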